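/- Under the Erdős–Rényi model with edge probability p, for fixed 0<ε<N, the expectation of φ(u,S) = (ωN − εd_u)/√(ε(N−ε)d_u(N−d_u)) equals 0, where ω = Σ_{v∈S\{u}} X_v and d_u = Σ_{v≠u} X_v for i.i.d. Bernoulli(p) variables X_v (with the convention that the expression is interpreted suitably when d_u∈{0,N}). -/

import Mathlib

open MeasureTheory Finset

set_option maxHeartbeats 1000000 in
theorem stmt_8 {Ω : Type*} [MeasurableSpace Ω] (μ : Measure Ω) [IsProbabilityMeasure μ]
    {V : Type*} [Fintype V] [DecidableEq V]
    (u : V) (S : Finset V) (hu : u ∈ S)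
    (p : ℝ) (hp0 : 0 ≤ p) (hp1 : p ≤ 1)
    (X : V → Ω → ℝ)
    (hmeas : ∀ v, Measurable (X v))
    (hBer : ∀ v g, X v g = 0 ∨ X v g = 1)
    (hprob : ∀ v, v ≠ u → μ {g | X v g = 1} = ENNReal.ofReal p)
    (hindep : ProbabilityTheory.iIndepFun X μ)
    (N ε : ℝ) (hN : N = (Fintype.card V : ℝ) - 1) (hNpos : 0 < N)
    (hε : ε = (S.card : ℝ) - 1) (hε0 : 0 < ε) (hεN : ε < N) :
    ∫ g, ((∑ v ∈ S.erase u, X v g) * N - ε * (∑ v ∈ Finset.univ.erase u, X v g)) /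
        Real.sqrt (ε * (N - ε) * (∑ v ∈ Finset.univ.erase u, X v g) *
          (N - (∑ v ∈ Finset.univ.erase u, X v g))) ∂μ = 0 := by
  classical
  set U : Finset V := Finset.univ.erase u with hUdef
  set S' : Finset V := S.erase u with hS'def
  -- laws
  set L : V → Measure ℝ := fun v => μ.map (X v) with hLdef
  haveI hLprob : ∀ v, IsProbabilityMeasure (L v) :=
    fun v => Measure.isProbabilityMeasure_map (hmeas v).aemeasurable
  haveI hLsf : ∀ v, SigmaFinite (L v) := fun v => inferInstance
  have jmeas : Measurable (fun g (v : V) => X v g) := measurable_pi_lambda _ hmeas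
  -- the joint law is the product measure
  have hν : μ.map (fun g v => X v g) = Measure.pi L := by
    refine (Measure.pi_eq (fun s hs => ?_)).symm
    rw [Measure.map_apply jmeas (MeasurableSet.univ_pi hs)]
    have hpre : (fun g v => X v g) ⁻¹' (Set.pi Set.univ s)
        = ⋂ v ∈ (Finset.univ : Finset V), X v ⁻¹' s v := by
      ext g; simp [Set.mem_pi]
    rw [hpre, hindep.measure_inter_preimage_eq_mul _ (fun i _ => hs i)]
    exact Finset.prod_congr rfl fun v _ => (Measure.map_apply (hmeas v) (hs v)).symm
  -- the common Bernoulli law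
  have hlaw : ∀ v, v ≠ u → ∀ s : Set ℝ, MeasurableSet s →
      μ (X v ⁻¹' s) = (if (1:ℝ) ∈ s then ENNReal.ofReal p else 0)
        + (if (0:ℝ) ∈ s then 1 - ENNReal.ofReal p else 0) := by
    intro v hv s hs
    have h1 : MeasurableSet {g | X v g = 1} := hmeas v (measurableSet_singleton 1)
    have hsplit := measure_inter_add_diff (μ := μ) (X v ⁻¹' s) h1
    have hA1 : X v ⁻¹' s ∩ {g | X v g = 1}
        = if (1:ℝ) ∈ s then {g | X v g = 1} else ∅ := by
      by_cases h : (1:ℝ) ∈ s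
      · simp only [h, if_true]
        ext g
        simp only [Set.mem_inter_iff, Set.mem_preimage, Set.mem_setOf_eq]
        exact ⟨fun ⟨_, h2⟩ => h2, fun h2 => ⟨h2 ▸ h, h2⟩⟩
      · simp only [h, if_false]
        ext g
        simp only [Set.mem_inter_iff, Set.mem_preimage, Set.mem_setOf_eq, Set.mem_empty_iff_false,
          iff_false, not_and]
        intro hgs hg1
        exact h (hg1 ▸ hgs)
    have hA0 : X v ⁻¹' s \ {g | X v g = 1}
        = if (0:ℝ) ∈ s then {g | X v g = 1}ᶜ else ∅ := by
      by_cases h : (0:ℝ) ∈ s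
      · simp only [h, if_true]
        ext g
        simp only [Set.mem_diff, Set.mem_preimage, Set.mem_setOf_eq, Set.mem_compl_iff]
        constructor
        · exact fun ⟨_, h2⟩ => h2
        · intro h2
          rcases hBer v g with h0 | h1'
          · exact ⟨h0 ▸ h, h2⟩
          · exact absurd h1' h2
      · simp only [h, if_false]
        ext g
        simp only [Set.mem_diff, Set.mem_preimage, Set.mem_setOf_eq, Set.mem_empty_iff_false,
          iff_false, not_and]
        intro hgs hg1
        rcases hBer v g with h0 | h1'
        · exact h (h0 ▸ hgs)
        · exact hg1 h1'
    have hc : μ ({g | X v g = 1}ᶜ) = 1 - ENNReal.ofReal p := by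
      rw [measure_compl h1 (measure_ne_top μ _), hprob v hv, measure_univ]
    rw [hA1, hA0] at hsplit
    rw [← hsplit]
    congr 1
    · by_cases h : (1:ℝ) ∈ s <;> simp [h, hprob v hv]
    · by_cases h : (0:ℝ) ∈ s <;> simp [h, hc]
  have hLeq : ∀ v w, v ≠ u → w ≠ u → L v = L w := by
    intro v w hv hw
    ext s hs
    rw [hLdef]
    simp only
    rw [Measure.map_apply (hmeas v) hs, Measure.map_apply (hmeas w) hs,
      hlaw v hv s hs, hlaw w hw s hs]
  -- the elementary integrands
  set T : V → (V → ℝ) → ℝ := fun v x =>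
    x v / Real.sqrt (ε * (N - ε) * (∑ w ∈ U, x w) * (N - ∑ w ∈ U, x w)) with hTdef
  have hDmeas : Measurable fun x : V → ℝ => ∑ w ∈ U, x w :=
    Finset.measurable_sum _ (fun w _ => measurable_pi_apply w)
  have hTmeas : ∀ v, Measurable (T v) := by
    intro v
    exact (measurable_pi_apply v).div
      (((measurable_const.mul hDmeas).mul
        (measurable_const.sub hDmeas)).sqrt)
  -- symmetry: the integral of T v does not depend on v ∈ U
  have hswap : ∀ v w, v ∈ U → w ∈ U →
      ∫ x, T v x ∂(Measure.pi L) = ∫ x, T w x ∂(Measure.pi L) := by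
    intro v w hv hw
    have hvu : v ≠ u := (Finset.mem_erase.mp hv).1
    have hwu : w ≠ u := (Finset.mem_erase.mp hw).1
    set e := Equiv.swap v w with hedef
    have heu : e u = u := Equiv.swap_apply_of_ne_of_ne (Ne.symm hvu) (Ne.symm hwu)
    have hLe : (fun i => L (e i)) = L := by
      funext i
      rcases eq_or_ne i v with rfl | hiv
      · rw [hedef, Equiv.swap_apply_left]
        exact hLeq w i hwu hvu
      rcases eq_or_ne i w with rfl | hiw
      · rw [hedef, Equiv.swap_apply_right]
        exact hLeq v i hvu hwu
      · rw [hedef, Equiv.swap_apply_of_ne_of_ne hiv hiw]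
    have hmp : MeasurePreserving (MeasurableEquiv.piCongrLeft (fun _ : V => ℝ) e)
        (Measure.pi L) (Measure.pi L) := by
      have h := measurePreserving_piCongrLeft L e
      rwa [show (Measure.pi fun i' => L (e i')) = Measure.pi L from by rw [hLe]] at h
    have happ : ∀ x : V → ℝ, ∀ b,
        (MeasurableEquiv.piCongrLeft (fun _ : V => ℝ) e) x b = x (e b) := by
      intro x b
      have h := MeasurableEquiv.piCongrLeft_apply_apply (β := fun _ : V => ℝ) e x (e b)
      rwa [Equiv.swap_apply_self] at h
    have hcomp : ∀ x, T v ((MeasurableEquiv.piCongrLeft (fun _ : V => ℝ) e) x) = T w x := by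
      intro x
      have hsum : ∑ w' ∈ U, (MeasurableEquiv.piCongrLeft (fun _ : V => ℝ) e) x w'
          = ∑ w' ∈ U, x w' := by
        refine Finset.sum_congr rfl (fun i _ => happ x i) |>.trans ?_
        refine Finset.sum_equiv e (fun i => ?_) (fun i _ => rfl)
        constructor
        · intro hi
          refine Finset.mem_erase.mpr ⟨?_, Finset.mem_univ _⟩
          intro hcon
          exact (Finset.mem_erase.mp hi).1 (e.injective (hcon.trans heu.symm))
        · intro hi
          refine Finset.mem_erase.mpr ⟨?_, Finset.mem_univ _⟩
          intro hcon
          exact (Finset.mem_erase.mp hi).1 (by rw [hcon, heu])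
      rw [hTdef]
      simp only
      rw [hsum, happ x v, hedef, Equiv.swap_apply_left]
    calc ∫ x, T v x ∂(Measure.pi L)
        = ∫ x, T v ((MeasurableEquiv.piCongrLeft (fun _ : V => ℝ) e) x) ∂(Measure.pi L) :=
          (hmp.integral_comp (MeasurableEquiv.measurableEmbedding _) (T v)).symm
      _ = ∫ x, T w x ∂(Measure.pi L) := by simp_rw [hcomp]
  -- a.e. Bernoulli values
  have hae : ∀ᵐ x ∂(Measure.pi L), ∀ v, x v = 0 ∨ x v = 1 := by
    rw [← hν]
    have hsmeas : MeasurableSet {x : V → ℝ | ∀ v, x v = 0 ∨ x v = 1} := by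
      have : {x : V → ℝ | ∀ v, x v = 0 ∨ x v = 1}
          = ⋂ v, (fun x : V → ℝ => x v) ⁻¹' {0, 1} := by
        ext x; simp [Set.mem_iInter]
      rw [this]
      exact MeasurableSet.iInter fun v =>
        (measurable_pi_apply v) (by measurability)
    rw [ae_map_iff jmeas.aemeasurable hsmeas]
    exact ae_of_all _ (fun g v => hBer v g)
  -- cardinalities
  have hcardV : 1 ≤ Fintype.card V := Fintype.card_pos_iff.mpr ⟨u⟩
  have hNU : (U.card : ℝ) = N := by
    rw [hUdef, Finset.card_erase_of_mem (Finset.mem_univ u), Finset.card_univ,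
      Nat.cast_sub hcardV, hN, Nat.cast_one]
  have hεS : (S'.card : ℝ) = ε := by
    rw [hS'def, Finset.card_erase_of_mem hu,
      Nat.cast_sub (Finset.card_pos.mpr ⟨u, hu⟩), hε, Nat.cast_one]
  -- uniform bound
  have hsqpos : 0 < ε * (N - ε) := mul_pos hε0 (by linarith)
  have hrs : 0 < Real.sqrt (ε * (N - ε)) := Real.sqrt_pos.mpr hsqpos
  have hbound : ∀ v, v ∈ U → ∀ x : V → ℝ, (∀ w, x w = 0 ∨ x w = 1) →
      |T v x| ≤ 1 / Real.sqrt (ε * (N - ε)) := by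
    intro v hv x hx
    have hRHS : 0 ≤ 1 / Real.sqrt (ε * (N - ε)) := by positivity
    rcases hx v with h0 | h1
    · rw [hTdef]; simp only [h0, zero_div, abs_zero]; exact hRHS
    · set D := ∑ w ∈ U, x w with hDdef
      have hDk : D = ((U.filter (fun w => x w = 1)).card : ℝ) := by
        rw [hDdef, ← Finset.sum_filter_add_sum_filter_not U (fun w => x w = 1)]
        rw [Finset.sum_congr rfl (fun w hw => (Finset.mem_filter.mp hw).2),
          Finset.sum_const, nsmul_eq_mul, mul_one,
          Finset.sum_eq_zero (fun w hw => ?_), add_zero]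
        rcases hx w with h0' | h1'
        · exact h0'
        · exact absurd h1' (Finset.mem_filter.mp hw).2
      have hkle : (U.filter (fun w => x w = 1)).card ≤ U.card := Finset.card_filter_le _ _
      rcases eq_or_lt_of_le hkle with hkeq | hklt
      · -- D = N, denominator is zero, T = 0
        have hDN : D = N := by rw [hDk, hkeq, hNU]
        rw [hTdef]
        simp only [← hDdef, hDN, sub_self, mul_zero, Real.sqrt_zero, div_zero, abs_zero]
        exact hRHS
      · -- 1 ≤ D ≤ N - 1
        have hD1 : 1 ≤ D := by
          rw [hDdef, ← h1]
          refine Finset.single_le_sum (fun w _ => ?_) hv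
          rcases hx w with h0' | h1'
          · simp [h0']
          · simp [h1']
        have hDle : D ≤ N - 1 := by
          have h2 : (U.filter (fun w => x w = 1)).card + 1 ≤ U.card := hklt
          have h3 : ((U.filter (fun w => x w = 1)).card : ℝ) + 1 ≤ (U.card : ℝ) := by
            exact_mod_cast h2
          rw [hDk]; rw [hNU] at h3; linarith
        have hprod : 1 ≤ D * (N - D) := by nlinarith
        have hargge : ε * (N - ε) ≤ ε * (N - ε) * D * (N - D) := by nlinarith
        rw [hTdef]
        simp only [← hDdef, h1, abs_div, abs_one]
        rw [abs_of_nonneg (Real.sqrt_nonneg _)]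
        exact one_div_le_one_div_of_le hrs (Real.sqrt_le_sqrt hargge)
  -- integrability
  have hInt : ∀ v, v ∈ U → Integrable (T v) (Measure.pi L) := by
    intro v hv
    refine (integrable_const (1 / Real.sqrt (ε * (N - ε)))).mono'
      (hTmeas v).aestronglyMeasurable ?_
    filter_upwards [hae] with x hx
    simpa using hbound v hv x hx
  have hS'U : S' ⊆ U := fun w hw =>
    Finset.mem_erase.mpr ⟨(Finset.mem_erase.mp hw).1, Finset.mem_univ w⟩
  have hS'ne : S'.Nonempty := by
    refine Finset.card_pos.mp (Nat.pos_of_ne_zero ?_)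
    intro h
    rw [h] at hεS
    simp at hεS
    linarith
  obtain ⟨v₀, hv₀⟩ := hS'ne
  have hv₀U : v₀ ∈ U := hS'U hv₀
  set c := ∫ x, T v₀ x ∂(Measure.pi L) with hcdef
  have hIconst : ∀ v ∈ U, ∫ x, T v x ∂(Measure.pi L) = c := fun v hv => hswap v v₀ hv hv₀U
  -- the big integrand
  set F : (V → ℝ) → ℝ := fun x =>
    ((∑ v ∈ S', x v) * N - ε * ∑ v ∈ U, x v) /
      Real.sqrt (ε * (N - ε) * (∑ v ∈ U, x v) * (N - ∑ v ∈ U, x v)) with hFdef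
  have hFmeas : Measurable F := by
    refine Measurable.div ?_ (((measurable_const.mul hDmeas).mul
      (measurable_const.sub hDmeas)).sqrt)
    exact ((Finset.measurable_sum _ (fun w _ => measurable_pi_apply w)).mul
      measurable_const).sub (measurable_const.mul hDmeas)
  have hFeq : ∀ x : V → ℝ, F x = N * ∑ v ∈ S', T v x - ε * ∑ v ∈ U, T v x := by
    intro x
    rw [hFdef, hTdef]
    simp only
    rw [sub_div]
    congr 1
    · rw [mul_comm _ N, mul_div_assoc, Finset.sum_div]
    · rw [mul_div_assoc, Finset.sum_div]
  have hstep : ∫ g, ((∑ v ∈ S', X v g) * N - ε * (∑ v ∈ U, X v g)) /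
        Real.sqrt (ε * (N - ε) * (∑ v ∈ U, X v g) * (N - (∑ v ∈ U, X v g))) ∂μ
      = ∫ x, F x ∂(Measure.pi L) := by
    rw [← hν, integral_map jmeas.aemeasurable hFmeas.aestronglyMeasurable]
  rw [hstep]
  have hint1 : Integrable (fun x => N * ∑ v ∈ S', T v x) (Measure.pi L) :=
    (integrable_finset_sum S' (fun v hv => hInt v (hS'U hv))).const_mul N
  have hint2 : Integrable (fun x => ε * ∑ v ∈ U, T v x) (Measure.pi L) :=
    (integrable_finset_sum U (fun v hv => hInt v hv)).const_mul ε
  calc ∫ x, F x ∂(Measure.pi L)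
      = ∫ x, (N * ∑ v ∈ S', T v x - ε * ∑ v ∈ U, T v x) ∂(Measure.pi L) := by
        simp_rw [hFeq]
    _ = N * ∑ v ∈ S', (∫ x, T v x ∂(Measure.pi L))
        - ε * ∑ v ∈ U, (∫ x, T v x ∂(Measure.pi L)) := by
        rw [integral_sub hint1 hint2, integral_const_mul, integral_const_mul,
          integral_finset_sum S' (fun v hv => hInt v (hS'U hv)),
          integral_finset_sum U (fun v hv => hInt v hv)]
    _ = N * (S'.card * c) - ε * (U.card * c) := by
        rw [Finset.sum_congr rfl (fun v hv => hIconst v (hS'U hv)),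
          Finset.sum_congr rfl (fun v hv => hIconst v hv),
          Finset.sum_const, Finset.sum_const, nsmul_eq_mul, nsmul_eq_mul]
    _ = 0 := by rw [hεS, hNU]; ring
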